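/- Let A be a commutative ring and I ⊆ A an ideal. If an A-module M is I-adically complete (the natural map M → lim_n M/IⁿM is bijective), then M is derived complete with respect to I, i.e., for every f ∈ I, Hom_A(A_f, M) = 0 and Ext¹_A(A_f, M) = 0. -/

import Mathlib

/-!
Statement 10: If an `A`-module `M` is `I`-adically complete (the natural map
`M → lim_n M/IⁿM` is bijective), then `M` is derived complete with respect to `I`:
for every `f ∈ I`, `Hom_A(A_f, M) = 0` and `Ext¹_A(A_f, M) = 0`.
-/

open CategoryTheory

open Limits

noncomputable section
namespace DCAux

universe v
variable {A : Type v} [CommRing A]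

/-- The map `(ℕ →₀ A) →ₗ (ℕ →₀ A)` sending `e n ↦ e n - f • e (n+1)`. -/
def dAux (f : A) : (ℕ →₀ A) →ₗ[A] (ℕ →₀ A) :=
  LinearMap.id - f • Finsupp.lmapDomain A A (· + 1)

lemma dAux_single (f : A) (n : ℕ) (a : A) :
    dAux f (Finsupp.single n a) = Finsupp.single n a - f • Finsupp.single (n + 1) a := by
  simp [dAux, Finsupp.mapDomain_single]

lemma dAux_apply_zero (f : A) (c : ℕ →₀ A) : dAux f c 0 = c 0 := by
  have : Finsupp.mapDomain (· + 1) c 0 = 0 :=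
    Finsupp.mapDomain_notin_range _ _ (by simp)
  simp [dAux, Finsupp.lmapDomain_apply, this]

lemma dAux_apply_succ (f : A) (c : ℕ →₀ A) (j : ℕ) :
    dAux f c (j + 1) = c (j + 1) - f * c j := by
  have : Finsupp.mapDomain (· + 1) c (j + 1) = c j :=
    Finsupp.mapDomain_apply (add_left_injective 1) _ _
  simp [dAux, Finsupp.lmapDomain_apply, this]

lemma dAux_injective (f : A) : Function.Injective (dAux f) := by
  rw [injective_iff_map_eq_zero]
  intro c hc
  have key : ∀ j, c j = 0 := by
    intro j
    induction j with
    | zero => rw [← dAux_apply_zero f c, hc]; rfl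
    | succ j ih =>
        have := congrArg (fun x : ℕ →₀ A => x (j + 1)) hc
        simp only [dAux_apply_succ, Finsupp.coe_zero, Pi.zero_apply] at this
        rw [ih, mul_zero, sub_zero] at this
        exact this
  ext j; exact key j

variable (f : A)

/-- `u n = 1 / f ^ n` in `Localization.Away f`. -/
def u (n : ℕ) : Localization.Away f := (IsLocalization.Away.invSelf f) ^ n

lemma umul (k : ℕ) : algebraMap A (Localization.Away f) (f ^ k) * u f k = 1 := by
  induction k with
  | zero => simp [u]
  | succ k ih =>
      have h := IsLocalization.Away.mul_invSelf (S := Localization.Away f) f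
      rw [u, pow_succ, pow_succ, map_mul, mul_mul_mul_comm]
      rw [u] at ih
      rw [ih, h, one_mul]

lemma pow_smul_u (k n : ℕ) : (f ^ k) • u f (n + k) = u f n := by
  rw [Algebra.smul_def, u, pow_add, mul_comm ((IsLocalization.Away.invSelf f) ^ n),
    ← mul_assoc, ← u, umul, one_mul, u]

lemma f_smul_u (n : ℕ) : f • u f (n + 1) = u f n := by
  simpa [pow_one] using pow_smul_u f 1 n

/-- The augmentation `(ℕ →₀ A) →ₗ Localization.Away f`, `e n ↦ 1 / f ^ n`. -/
def piAux : (ℕ →₀ A) →ₗ[A] Localization.Away f :=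
  Finsupp.lsum A fun n => LinearMap.toSpanSingleton A _ (u f n)

lemma piAux_single (n : ℕ) (a : A) : piAux f (Finsupp.single n a) = a • u f n := by
  simp [piAux]

lemma piAux_comp_dAux : (piAux f).comp (dAux f) = 0 := by
  apply Finsupp.lhom_ext
  intro n a
  simp only [LinearMap.comp_apply, dAux_single, map_sub, map_smul, piAux_single,
    LinearMap.zero_apply]
  rw [smul_comm f a, f_smul_u, sub_self]

lemma piAux_surjective : Function.Surjective (piAux f) := by
  intro x
  obtain ⟨⟨a, s⟩, hx⟩ := IsLocalization.surj (Submonoid.powers f) x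
  obtain ⟨n, hn⟩ := s.2
  have hn' : f ^ n = (s : A) := hn
  refine ⟨Finsupp.single n a, ?_⟩
  rw [piAux_single]
  have hu : algebraMap A (Localization.Away f) (s : A) * u f n = 1 := by
    rw [← hn']; exact umul f n
  calc a • u f n = (x * algebraMap A (Localization.Away f) (s : A)) * u f n := by
        rw [hx, Algebra.smul_def]
    _ = x * (algebraMap A (Localization.Away f) (s : A) * u f n) := by ring
    _ = x := by rw [hu, mul_one]

def hseq (a : ℕ → A) : ℕ → A
  | 0 => a 0
  | n + 1 => f * hseq a n + a (n + 1)

variable {I : Ideal A} {M : Type v} [AddCommGroup M] [Module A M]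

lemma exists_solution [IsAdicComplete I M] (hf : f ∈ I) (b : ℕ → M) :
    ∃ m : ℕ → M, ∀ n, m n - f • m (n + 1) = b n := by
  set s : ℕ → ℕ → M := fun n j => ∑ k ∈ Finset.range j, f ^ k • b (n + k) with hs
  have hcauchy : ∀ n, ∀ {p q : ℕ}, p ≤ q →
      s n p ≡ s n q [SMOD (I ^ p • ⊤ : Submodule A M)] := by
    intro n p q hpq
    rw [SModEq.sub_mem]
    have : s n p - s n q = -∑ k ∈ Finset.Ico p q, f ^ k • b (n + k) := by
      rw [Finset.sum_Ico_eq_sub _ hpq]; abel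
    rw [this]
    refine neg_mem (Submodule.sum_mem _ fun k hk => ?_)
    rw [Finset.mem_Ico] at hk
    exact Submodule.smul_mem_smul
      (Ideal.pow_le_pow_right hk.1 (Ideal.pow_mem_pow hf k)) Submodule.mem_top
  have := fun n => IsPrecomplete.prec (inferInstance : IsPrecomplete I M) (hcauchy n)
  choose m hm using this
  refine ⟨m, fun n => ?_⟩
  have key : m n - f • m (n + 1) - b n = 0 := by
    apply IsHausdorff.haus (inferInstance : IsHausdorff I M)
    intro j
    have h1 : s n (j + 1) ≡ m n [SMOD (I ^ j • ⊤ : Submodule A M)] :=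
      (hm n (j + 1)).mono
        (Submodule.smul_mono_left (Ideal.pow_le_pow_right (Nat.le_succ j)))
    have h2 : f • s (n + 1) j ≡ f • m (n + 1) [SMOD (I ^ j • ⊤ : Submodule A M)] :=
      (hm (n + 1) j).smul f
    have h3 : s n (j + 1) - f • s (n + 1) j - b n = 0 := by
      have e1 : s n (j + 1) = (∑ k ∈ Finset.range j, f ^ (k + 1) • b (n + (k + 1))) + b n := by
        rw [hs]
        simpa using Finset.sum_range_succ' (fun k => f ^ k • b (n + k)) j
      have e2 : f • s (n + 1) j = ∑ k ∈ Finset.range j, f ^ (k + 1) • b (n + (k + 1)) := by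
        rw [hs, Finset.smul_sum]
        refine Finset.sum_congr rfl fun k _ => ?_
        rw [smul_smul, ← pow_succ', show n + 1 + k = n + (k + 1) by omega]
      rw [e1, e2]; abel
    have := ((h1.sub h2).sub (SModEq.refl (U := (I ^ j • ⊤ : Submodule A M)) (x := b n)))
    rw [h3] at this
    exact this.symm
  exact sub_eq_zero.mp key


lemma hseq_smul_u (a : ℕ → A) (N : ℕ) :
    hseq f a N • u f N = ∑ k ∈ Finset.range (N + 1), a k • u f k := by
  induction N with
  | zero => simp [hseq, u]
  | succ N ih =>
      rw [Finset.sum_range_succ, ← ih, hseq]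
      rw [add_smul, mul_comm, mul_smul, f_smul_u]

lemma piAux_eq_hseq (a : ℕ →₀ A) (N : ℕ) (hN : ∀ k, k ∈ a.support → k ∈ Finset.range (N + 1)) :
    piAux f a = hseq f a N • u f N := by
  rw [hseq_smul_u]
  have h1 : piAux f a = ∑ k ∈ a.support, a k • u f k := by
    rw [piAux, Finsupp.lsum_apply]; rfl
  rw [h1]
  exact Finset.sum_subset (fun k hk => hN k hk)
    (fun k _ hk => by rw [Finsupp.notMem_support_iff.mp hk, zero_smul])

lemma exists_preimage_of_piAux_eq_zero (a : ℕ →₀ A) (ha : piAux f a = 0) :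
    ∃ c : ℕ →₀ A, dAux f c = a := by
  set N := a.support.sup id with hNdef
  have hsupp : ∀ k, N < k → a k = 0 := by
    intro k hk
    by_contra h
    have hmem : k ∈ a.support := Finsupp.mem_support_iff.mpr h
    have h2 : k ≤ N := Finset.le_sup (f := id) hmem
    omega
  have hval : piAux f a = hseq f a N • u f N := by
    apply piAux_eq_hseq
    intro k hk
    rw [Finset.mem_range]
    have h2 : k ≤ N := Finset.le_sup (f := id) hk
    omega
  -- `hseq f a N` maps to zero in the localization
  have hzero : algebraMap A (Localization.Away f) (hseq f (⇑a) N) = 0 := by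
    have h0 : hseq f (⇑a) N • u f N = 0 := by rw [← hval, ha]
    have : algebraMap A (Localization.Away f) (hseq f (⇑a) N) * u f N = 0 := by
      rw [← Algebra.smul_def, h0]
    calc algebraMap A (Localization.Away f) (hseq f (⇑a) N)
        = algebraMap A (Localization.Away f) (hseq f (⇑a) N) *
            (algebraMap A (Localization.Away f) (f ^ N) * u f N) := by rw [umul, mul_one]
      _ = algebraMap A (Localization.Away f) (f ^ N) *
            (algebraMap A (Localization.Away f) (hseq f (⇑a) N) * u f N) := by ring
      _ = 0 := by rw [this, mul_zero]
  rw [IsLocalization.map_eq_zero_iff (Submonoid.powers f)] at hzero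
  obtain ⟨⟨-, mexp, rfl⟩, hmf⟩ := hzero
  -- hmf : f ^ mexp * hseq f a N = 0
  have hstab : ∀ j, hseq f (⇑a) (N + j) = f ^ j * hseq f (⇑a) N := by
    intro j
    induction j with
    | zero => simp
    | succ j ih =>
        show hseq f (⇑a) (N + j + 1) = _
        rw [hseq, ih, hsupp _ (by omega), add_zero, pow_succ]
        ring
  have hvanish : ∀ n, N + mexp ≤ n → hseq f (⇑a) n = 0 := by
    intro n hn
    obtain ⟨i, rfl⟩ := Nat.exists_eq_add_of_le hn
    rw [show N + mexp + i = N + (mexp + i) by omega, hstab, pow_add]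
    calc f ^ mexp * f ^ i * hseq f (⇑a) N = f ^ i * (f ^ mexp * hseq f (⇑a) N) := by ring
      _ = 0 := by rw [hmf, mul_zero]
  refine ⟨Finsupp.onFinset (Finset.range (N + mexp)) (hseq f (⇑a))
    (fun n hn => Finset.mem_range.mpr (by by_contra h; exact hn (hvanish n (by omega)))), ?_⟩
  ext i
  cases i with
  | zero =>
      rw [dAux_apply_zero, Finsupp.onFinset_apply]
      rfl
  | succ j =>
      rw [dAux_apply_succ, Finsupp.onFinset_apply, Finsupp.onFinset_apply]
      show hseq f (⇑a) (j + 1) - f * hseq f (⇑a) j = a (j + 1)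
      rw [hseq]
      ring

lemma hom_eq_zero {I : Ideal A} {M : Type v} [AddCommGroup M] [Module A M]
    [IsHausdorff I M] (hf : f ∈ I) (g : Localization.Away f →ₗ[A] M) : g = 0 := by
  have hu0 : ∀ n, g (u f n) = 0 := by
    intro n
    apply IsHausdorff.haus (inferInstance : IsHausdorff I M)
    intro k
    rw [SModEq.zero]
    have : g (u f n) = f ^ k • g (u f (n + k)) := by rw [← map_smul, pow_smul_u]
    rw [this]
    exact Submodule.smul_mem_smul (Ideal.pow_mem_pow hf k) Submodule.mem_top
  have hcomp : g.comp (piAux f) = 0 := by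
    apply Finsupp.lhom_ext
    intro n a
    simp [piAux_single, hu0]
  ext x
  obtain ⟨y, rfl⟩ := piAux_surjective f x
  have := congrArg (fun h : (ℕ →₀ A) →ₗ[A] M => h y) hcomp
  simpa using this

lemma comp_dAux_surjective {I : Ideal A} {M : Type v} [AddCommGroup M] [Module A M]
    [IsAdicComplete I M] (hf : f ∈ I) (ψ : (ℕ →₀ A) →ₗ[A] M) :
    ∃ φ : (ℕ →₀ A) →ₗ[A] M, φ.comp (dAux f) = ψ := by
  obtain ⟨m, hm⟩ := exists_solution f hf (fun n => ψ (Finsupp.single n 1))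
  refine ⟨Finsupp.lsum A fun n => LinearMap.toSpanSingleton A M (m n), ?_⟩
  apply Finsupp.lhom_ext
  intro n a
  have : Finsupp.single n a = a • Finsupp.single n (1 : A) := by
    rw [Finsupp.smul_single, smul_eq_mul, mul_one]
  rw [LinearMap.comp_apply, this, map_smul, map_smul, dAux_single]
  simp only [map_sub, map_smul, Finsupp.lsum_single, LinearMap.toSpanSingleton_apply,
    one_smul]
  rw [← hm n]


section CategoryPart

variable (f : A)

def dHom : ModuleCat.of A (ℕ →₀ A) ⟶ ModuleCat.of A (ℕ →₀ A) := ModuleCat.ofHom (dAux f)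

def piHom : ModuleCat.of A (ℕ →₀ A) ⟶ ModuleCat.of A (Localization.Away f) := ModuleCat.ofHom (piAux f)

lemma cat_comp_zero : dHom f ≫ piHom f = 0 := ModuleCat.hom_ext (piAux_comp_dAux f)


/-- The two-term free complex `⋯ → 0 → (ℕ →₀ A) → (ℕ →₀ A)`. -/
def resX : ℕ → ModuleCat.{v} A
  | 0 => ModuleCat.of A (ℕ →₀ A)
  | 1 => ModuleCat.of A (ℕ →₀ A)
  | _ + 2 => ModuleCat.of A PUnit

def resd : ∀ n : ℕ, resX (A := A) (n + 1) ⟶ resX (A := A) n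
  | 0 => dHom f
  | _ + 1 => 0

def resComplex : ChainComplex (ModuleCat.{v} A) ℕ :=
  ChainComplex.of (resX (A := A)) (resd f) (fun n => by
    rw [show resd f (n + 1) = 0 from rfl, zero_comp])

lemma resComplex_d_1_0 : (resComplex f).d 1 0 = dHom f :=
  by unfold resComplex; exact ChainComplex.of_d (resX (A := A)) (resd f) 0

def resπ : resComplex f ⟶ (ChainComplex.single₀ (ModuleCat.{v} A)).obj
    (ModuleCat.of A (Localization.Away f)) :=
  (ChainComplex.toSingle₀Equiv _ _).symm ⟨piHom f, by
    rw [resComplex_d_1_0]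
    exact cat_comp_zero f⟩

lemma resπ_f_zero : (resπ f).f 0 = piHom f :=
  ChainComplex.toSingle₀Equiv_symm_apply_f_zero _ _

instance resProjective : ∀ n : ℕ, Projective (resX (A := A) n)
  | 0 => ModuleCat.projective_of_free (M := ModuleCat.of A (ℕ →₀ A))
      (Finsupp.basisSingleOne : Module.Basis ℕ A (ℕ →₀ A))
  | 1 => ModuleCat.projective_of_free (M := ModuleCat.of A (ℕ →₀ A))
      (Finsupp.basisSingleOne : Module.Basis ℕ A (ℕ →₀ A))
  | (_ + 2) => ModuleCat.projective_of_free (M := ModuleCat.of A PUnit)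
      (Module.Basis.empty (ι := PEmpty.{1}) _)

lemma resComplex_exactAt_succ (n : ℕ) : (resComplex f).ExactAt (n + 1) := by
  rw [HomologicalComplex.exactAt_iff' _ (n + 2) (n + 1) n (by simp) (by simp)]
  obtain (_ | n) := n
  · rw [ShortComplex.moduleCat_exact_iff]
    intro x hx
    have hx' : dAux f x = 0 := by
      rw [show (HomologicalComplex.sc' (resComplex f) 2 1 0).g = dHom f from
        resComplex_d_1_0 f] at hx
      exact hx
    refine ⟨0, ?_⟩
    have : x = 0 := dAux_injective f (by rw [hx']; exact (map_zero (dAux f)).symm)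
    rw [this, map_zero]
  · apply ShortComplex.exact_of_isZero_X₂
    exact ModuleCat.isZero_of_subsingleton (ModuleCat.of A PUnit)

lemma res_sc_exact : (ShortComplex.mk
    (dHom f) (piHom f) (cat_comp_zero f)).Exact := by
  rw [ShortComplex.moduleCat_exact_iff]
  intro x hx
  exact exists_preimage_of_piAux_eq_zero f x hx

lemma res_epi : Epi (ShortComplex.mk
    (dHom f) (piHom f) (cat_comp_zero f)).g := by
  rw [ModuleCat.epi_iff_surjective]
  exact piAux_surjective f

def resolution : ProjectiveResolution (ModuleCat.of A (Localization.Away f)) where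
  complex := resComplex f
  π := resπ f
  projective n := resProjective n
  quasiIso := ⟨fun n => by
    cases n with
    | zero =>
        rw [ChainComplex.quasiIsoAt₀_iff, ShortComplex.quasiIso_iff_of_zeros']
        · refine (ShortComplex.exact_and_epi_g_iff_of_iso ?_).2
            ⟨res_sc_exact f, res_epi f⟩
          exact ShortComplex.isoMk (Iso.refl _) (Iso.refl _) (Iso.refl _)
            (by simp [resComplex_d_1_0]; exact (Category.id_comp _).trans (Category.comp_id _).symm)
            (by simp [resπ_f_zero]; exact (Category.id_comp _).trans (Category.comp_id _).symm)
        all_goals rfl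
    | succ n =>
        rw [quasiIsoAt_iff_exactAt']
        · exact resComplex_exactAt_succ f n
        · exact ChainComplex.exactAt_succ_single_obj _ _⟩


lemma subsingleton_of_isZero {X : ModuleCat.{v} A} (h : IsZero X) : Subsingleton X := by
  have h0 : ∀ x : X, x = 0 := by
    intro x
    have hid : (𝟙 X : X ⟶ X) = 0 := h.eq_of_src _ _
    calc x = (𝟙 X : X ⟶ X) x := rfl
      _ = (0 : X ⟶ X) x := by rw [hid]
      _ = 0 := rfl
  exact ⟨fun a b => (h0 a).trans (h0 b).symm⟩

lemma linearYonedaObj_exactAt_one {I : Ideal A} {M : Type v} [AddCommGroup M] [Module A M]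
    [IsAdicComplete I M] (hf : f ∈ I) :
    (((resComplex f).linearYonedaObj A (ModuleCat.of A M))).ExactAt 1 := by
  rw [HomologicalComplex.exactAt_iff' _ 0 1 2 (by simp) (by simp)]
  rw [ShortComplex.moduleCat_exact_iff]
  intro x _
  obtain ⟨φ, hφ⟩ := comp_dAux_surjective f hf (show (ℕ →₀ A) →ₗ[A] M from x.hom)
  refine ⟨ModuleCat.ofHom φ, ?_⟩
  show ((resComplex f).linearYonedaObj A (ModuleCat.of A M)).d 0 1 (ModuleCat.ofHom φ) = x
  simp only [ChainComplex.linearYonedaObj_d]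
  rw [resComplex_d_1_0]
  exact ModuleCat.hom_ext hφ

lemma ext_one_subsingleton {I : Ideal A} {M : Type v} [AddCommGroup M] [Module A M]
    [IsAdicComplete I M] (hf : f ∈ I) :
    Subsingleton (((Ext A (ModuleCat.{v} A) 1).obj
        (Opposite.op (ModuleCat.of A (Localization.Away f)))).obj (ModuleCat.of A M)) := by
  have hzero : IsZero ((((resComplex f).linearYonedaObj A (ModuleCat.of A M))).homology 1) := by
    rw [← HomologicalComplex.exactAt_iff_isZero_homology]
    exact linearYonedaObj_exactAt_one f hf
  have hiso := (resolution f).isoExt (R := A) 1 (ModuleCat.of A M)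
  exact subsingleton_of_isZero (hzero.of_iso hiso)

end CategoryPart

end DCAux

end

theorem derived_complete_of_adic_complete
    {A : Type u} [CommRing A] (I : Ideal A)
    (M : Type u) [AddCommGroup M] [Module A M]
    (hM : IsAdicComplete I M) :
    ∀ f ∈ I,
      (∀ g : Localization.Away f →ₗ[A] M, g = 0) ∧
      Subsingleton
        (((Ext A (ModuleCat.{u} A) 1).obj
            (Opposite.op (ModuleCat.of A (Localization.Away f)))).obj
          (ModuleCat.of A M)) := by
  intro f hf
  haveI : IsAdicComplete I M := hM
  haveI : IsHausdorff I M := hM.toIsHausdorff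
  exact ⟨fun g => DCAux.hom_eq_zero f hf g, DCAux.ext_one_subsingleton f hf⟩
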